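/- For all positive integers D and n, the following identity holds: (D+1) · ∑_{j=1}^n j · binomial(n−j+D, D) = ∑_{j=1}^n j · binomial(j+D, D). -/
import Mathlib

open Finset

private lemma hockey (D m : ℕ) :
    ∑ i ∈ range m, Nat.choose (i + D) D = Nat.choose (m + D) (D + 1) := by
  induction m with
  | zero => simp
  | succ m ih =>
    rw [sum_range_succ, ih]
    have h : m + 1 + D = (m + D) + 1 := by omega
    rw [h, Nat.choose_succ_succ']
    omega

private lemma main_range (D n : ℕ) :
    (D + 1) * ∑ i ∈ range n, (n - i) * Nat.choose (i + D) D
      = ∑ i ∈ range n, (i + 1) * Nat.choose (i + 1 + D) D := by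
  induction n with
  | zero => simp
  | succ n ih =>
    have e1 : ∀ i ∈ range (n + 1), (n + 1 - i) * Nat.choose (i + D) D
        = (n - i) * Nat.choose (i + D) D + Nat.choose (i + D) D := by
      intro i hi
      have hi' : i ≤ n := by simpa [Nat.lt_succ_iff] using mem_range.mp hi
      have h : n + 1 - i = (n - i) + 1 := by omega
      rw [h, add_mul, one_mul]
    rw [sum_congr rfl e1, sum_add_distrib, sum_range_succ (fun i => (n - i) * Nat.choose (i + D) D) n,
      Nat.sub_self, zero_mul, add_zero, hockey, Nat.mul_add, ih, sum_range_succ]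
    have key : Nat.choose (n + 1 + D) (D + 1) * (D + 1)
        = Nat.choose (n + 1 + D) D * (n + 1) := by
      have := Nat.choose_succ_right_eq (n + 1 + D) D
      simpa using this
    have : (D + 1) * Nat.choose (n + 1 + D) (D + 1) = (n + 1) * Nat.choose (n + 1 + D) D := by
      rw [mul_comm (D + 1), key, mul_comm]
    omega

theorem det_degree_equality (D n : ℕ) (hD : 1 ≤ D) (hn : 1 ≤ n) :
    (D + 1) * ∑ j ∈ Finset.Icc 1 n, j * Nat.choose (n - j + D) D
      = ∑ j ∈ Finset.Icc 1 n, j * Nat.choose (j + D) D := by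
  have hL : ∑ j ∈ Finset.Icc 1 n, j * Nat.choose (n - j + D) D
      = ∑ i ∈ range n, (n - i) * Nat.choose (i + D) D := by
    rw [← Finset.Ico_add_one_right_eq_Icc, Finset.sum_Ico_eq_sum_range]
    simp only [Nat.add_sub_cancel, Nat.succ_sub_one]
    rw [← Finset.sum_range_reflect (fun i => (1 + i) * Nat.choose (n - (1 + i) + D) D) n]
    refine sum_congr rfl ?_
    intro j hj
    have hj' : j < n := mem_range.mp hj
    have h1 : 1 + (n - 1 - j) = n - j := by omega
    have h2 : n - (n - j) = j := by omega
    rw [h1, h2]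
  have hR : ∑ j ∈ Finset.Icc 1 n, j * Nat.choose (j + D) D
      = ∑ i ∈ range n, (i + 1) * Nat.choose (i + 1 + D) D := by
    rw [← Finset.Ico_add_one_right_eq_Icc, Finset.sum_Ico_eq_sum_range]
    simp only [Nat.add_sub_cancel, Nat.succ_sub_one]
    refine sum_congr rfl ?_
    intro j hj
    ring_nf
  rw [hL, hR, main_range]
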